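/- arXiv:1907.07158 — 2 statements merged into one kernel-verified Lean document; each statement's English description precedes it below -/
import Mathlib

section
/- Let V be a Weibull random variable with scale c > 0 and shape k > 0, let a > 0, and let 0 < V_ci < V_r. Then the first and second moments of the harvested wind power restricted to the continuous range are E[(a·V³)·1_{V_ci < V ≤ V_r}] = a·c³·[γ(1 + 3/k, (V_r/c)^k) − γ(1 + 3/k, (V_ci/c)^k)] and E[(a·V³)²·1_{V_ci < V ≤ V_r}] = a²·c⁶·[γ(1 + 6/k, (V_r/c)^k) − γ(1 + 6/k, (V_ci/c)^k)]. (Corollary 3: first and second moments of the harvested wind power.) -/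
open MeasureTheory Real
open scoped ENNReal NNReal

/-- The lower incomplete gamma function `γ(s, x) = ∫₀ˣ t^{s−1}·e^{−t} dt`. -/
noncomputable def lowerGamma (s x : ℝ) : ℝ :=
  ∫ t in (0 : ℝ)..x, t ^ (s - 1) * Real.exp (-t)

/-- Weibull density with scale `c > 0` and shape `k > 0` (zero for `v ≤ 0`). -/
noncomputable def weibullDensity (c k v : ℝ) : ℝ :=
  if 0 < v then (k / c) * (v / c) ^ (k - 1) * Real.exp (-(v / c) ^ k) else 0

lemma weibullDensity_nonneg {c k : ℝ} (hc : 0 < c) (hk : 0 < k) (v : ℝ) :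
    0 ≤ weibullDensity c k v := by
  unfold weibullDensity
  split_ifs with h
  · have h1 : (0:ℝ) < v / c := div_pos h hc
    positivity
  · exact le_refl 0

lemma weibullDensity_measurable (c k : ℝ) : Measurable (weibullDensity c k) := by
  unfold weibullDensity
  apply Measurable.ite measurableSet_Ioi
  · fun_prop
  · fun_prop

lemma gamma_integrand_intervalIntegrable {s : ℝ} (hs : 1 < s) (x1 x2 : ℝ) :
    IntervalIntegrable (fun t : ℝ => t ^ (s - 1) * Real.exp (-t)) volume x1 x2 := by
  exact (intervalIntegral.intervalIntegrable_rpow' (by linarith)).mul_continuousOn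
    (Continuous.continuousOn (by continuity))

lemma lowerGamma_sub {s : ℝ} (hs : 1 < s) (x1 x2 : ℝ) :
    lowerGamma s x2 - lowerGamma s x1 =
      ∫ t in x1..x2, t ^ (s - 1) * Real.exp (-t) := by
  unfold lowerGamma
  exact intervalIntegral.integral_interval_sub_left
    (gamma_integrand_intervalIntegrable hs 0 x2) (gamma_integrand_intervalIntegrable hs 0 x1)

lemma key_integral (c k p Vci Vr : ℝ) (hc : 0 < c) (hk : 0 < k) (hp : 0 < p)
    (hVci : 0 < Vci) (hVr : Vci < Vr) :
    ∫ v in Set.Ioc Vci Vr, weibullDensity c k v * v ^ p ∂volume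
      = c ^ p *
        (lowerGamma (1 + p / k) ((Vr / c) ^ k) - lowerGamma (1 + p / k) ((Vci / c) ^ k)) := by
  have hk0 : k ≠ 0 := hk.ne'
  have hs : 1 < 1 + p / k := by
    have : 0 < p / k := div_pos hp hk
    linarith
  rw [lowerGamma_sub hs]
  rw [← intervalIntegral.integral_of_le hVr.le]
  set g : ℝ → ℝ := fun t => c ^ p * (t ^ (p / k) * Real.exp (-t)) with hg
  have hgcont : Continuous g := by
    apply continuous_const.mul
    exact (Real.continuous_rpow_const (by positivity)).mul (by continuity)
  have hderiv : ∀ v ∈ Set.uIcc Vci Vr,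
      HasDerivAt (fun v : ℝ => (v / c) ^ k) (k / c * (v / c) ^ (k - 1)) v := by
    intro v hv
    have hv0 : 0 < v := lt_of_lt_of_le hVci (by
      rcases Set.mem_uIcc.mp hv with h | h
      · exact h.1
      · linarith [h.1])
    have hne : v / c ≠ 0 := ne_of_gt (div_pos hv0 hc)
    have := ((hasDerivAt_id v).div_const c).rpow_const (p := k) (Or.inl hne)
    convert this using 1
    simp only [id_eq]
    ring_nf
    rfl
  have hcont' : ContinuousOn (fun v : ℝ => k / c * (v / c) ^ (k - 1)) (Set.uIcc Vci Vr) := by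
    apply ContinuousOn.mul continuousOn_const
    apply ContinuousOn.rpow_const (by fun_prop)
    intro v hv
    have hv0 : 0 < v := lt_of_lt_of_le hVci (by
      rcases Set.mem_uIcc.mp hv with h | h
      · exact h.1
      · linarith [h.1])
    exact Or.inl (ne_of_gt (div_pos hv0 hc))
  have hsub := intervalIntegral.integral_comp_smul_deriv hderiv hcont' hgcont
  have heq : ∀ v ∈ Set.uIcc Vci Vr,
      weibullDensity c k v * v ^ p
        = (k / c * (v / c) ^ (k - 1)) • (g ∘ fun v : ℝ => (v / c) ^ k) v := by
    intro v hv
    have hv0 : 0 < v := lt_of_lt_of_le hVci (by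
      rcases Set.mem_uIcc.mp hv with h | h
      · exact h.1
      · linarith [h.1])
    have hvc : 0 < v / c := div_pos hv0 hc
    have hkp : k * (p / k) = p := by field_simp
    have h1 : ((v / c) ^ k) ^ (p / k) = (v / c) ^ p := by
      rw [← Real.rpow_mul hvc.le, hkp]
    have h2 : v ^ p = c ^ p * (v / c) ^ p := by
      rw [← Real.mul_rpow hc.le hvc.le, mul_comm c, div_mul_cancel₀ _ hc.ne']
    unfold weibullDensity
    rw [if_pos hv0]
    simp only [Function.comp_apply, smul_eq_mul, hg, h1]
    rw [h2]
    ring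
  rw [intervalIntegral.integral_congr heq, hsub]
  rw [hg]
  simp only
  rw [intervalIntegral.integral_const_mul]
  congr 1
  apply intervalIntegral.integral_congr
  intro t _
  rw [add_sub_cancel_left]

lemma moment_eq {Ω : Type*} [MeasurableSpace Ω] (μ : Measure Ω)
    (c k Vci Vr : ℝ) (hc : 0 < c) (hk : 0 < k)
    (V : Ω → ℝ) (hV : Measurable V)
    (hlaw : μ.map V = volume.withDensity fun v => ENNReal.ofReal (weibullDensity c k v))
    (g : ℝ → ℝ) (hg : Continuous g) :
    ∫ ω in {ω | Vci < V ω ∧ V ω ≤ Vr}, g (V ω) ∂μ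
      = ∫ v in Set.Ioc Vci Vr, weibullDensity c k v * g v ∂volume := by
  have hset : {ω | Vci < V ω ∧ V ω ≤ Vr} = V ⁻¹' Set.Ioc Vci Vr := rfl
  have hgm : AEStronglyMeasurable g (μ.map V) := hg.aestronglyMeasurable
  rw [hset, ← setIntegral_map measurableSet_Ioc hgm hV.aemeasurable, hlaw]
  have hrw : (fun v => ENNReal.ofReal (weibullDensity c k v))
      = fun v => ((weibullDensity c k v).toNNReal : ℝ≥0∞) := rfl
  rw [hrw, setIntegral_withDensity_eq_setIntegral_smul₀
    ((weibullDensity_measurable c k).real_toNNReal.aemeasurable) g measurableSet_Ioc]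
  refine setIntegral_congr_fun measurableSet_Ioc fun v _ => ?_
  simp [NNReal.smul_def, Real.coe_toNNReal _ (weibullDensity_nonneg hc hk v)]

/-- **Corollary 3 (first and second moments of the harvested wind power).**
`E[(a·V³)·1_{V_ci < V ≤ V_r}] = a·c³·[γ(1+3/k,(V_r/c)^k) − γ(1+3/k,(V_ci/c)^k)]` and
`E[(a·V³)²·1_{V_ci < V ≤ V_r}] = a²·c⁶·[γ(1+6/k,(V_r/c)^k) − γ(1+6/k,(V_ci/c)^k)]`. -/
theorem wind_power_first_second_moments
    {Ω : Type*} [MeasurableSpace Ω] (μ : Measure Ω) [IsProbabilityMeasure μ]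
    (a c k Vci Vr : ℝ) (ha : 0 < a) (hc : 0 < c) (hk : 0 < k)
    (hVci : 0 < Vci) (hVr : Vci < Vr)
    (V : Ω → ℝ) (hV : Measurable V)
    (hlaw : μ.map V = volume.withDensity fun v => ENNReal.ofReal (weibullDensity c k v)) :
    ∫ ω in {ω | Vci < V ω ∧ V ω ≤ Vr}, a * V ω ^ 3 ∂μ =
      a * c ^ 3
        * (lowerGamma (1 + 3 / k) ((Vr / c) ^ k) - lowerGamma (1 + 3 / k) ((Vci / c) ^ k)) ∧
    ∫ ω in {ω | Vci < V ω ∧ V ω ≤ Vr}, (a * V ω ^ 3) ^ 2 ∂μ =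
      a ^ 2 * c ^ 6
        * (lowerGamma (1 + 6 / k) ((Vr / c) ^ k) - lowerGamma (1 + 6 / k) ((Vci / c) ^ k)) := by
  have hc3 : c ^ (3:ℝ) = c ^ (3:ℕ) := by
    rw [show ((3:ℝ)) = ((3:ℕ):ℝ) by norm_num, Real.rpow_natCast]
  have hc6 : c ^ (6:ℝ) = c ^ (6:ℕ) := by
    rw [show ((6:ℝ)) = ((6:ℕ):ℝ) by norm_num, Real.rpow_natCast]
  constructor
  · rw [moment_eq μ c k Vci Vr hc hk V hV hlaw (fun v => a * v ^ 3) (by continuity)]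
    have : ∫ v in Set.Ioc Vci Vr, weibullDensity c k v * (a * v ^ 3) ∂volume
        = a * ∫ v in Set.Ioc Vci Vr, weibullDensity c k v * v ^ (3:ℝ) ∂volume := by
      rw [← MeasureTheory.integral_const_mul]
      refine integral_congr_ae (Filter.Eventually.of_forall fun v => ?_)
      simp only [show ((3:ℝ)) = ((3:ℕ):ℝ) by norm_num, Real.rpow_natCast]
      ring
    rw [this, key_integral c k 3 Vci Vr hc hk (by norm_num) hVci hVr, hc3]
    ring
  · rw [moment_eq μ c k Vci Vr hc hk V hV hlaw (fun v => (a * v ^ 3) ^ 2) (by continuity)]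
    have : ∫ v in Set.Ioc Vci Vr, weibullDensity c k v * (a * v ^ 3) ^ 2 ∂volume
        = a ^ 2 * ∫ v in Set.Ioc Vci Vr, weibullDensity c k v * v ^ (6:ℝ) ∂volume := by
      rw [← MeasureTheory.integral_const_mul]
      refine integral_congr_ae (Filter.Eventually.of_forall fun v => ?_)
      simp only [show ((6:ℝ)) = ((6:ℕ):ℝ) by norm_num, Real.rpow_natCast]
      ring
    rw [this, key_integral c k 6 Vci Vr hc hk (by norm_num) hVci hVr, hc6]
    ring
end

section
/- Let I be a real random variable with Gaussian density f_I(x) = (1/√(2π))·exp(−(x − I_d)²/2), and let g(x) = (η_c/K_c)·x² for 0 < x < K_c and g(x) = η_c·x for x ≥ K_c. Set τ = 1 + erf((I_d − K_c)/√2) and ν = τ − 1 − erf(I_d/√2). Then the mean harvested solar power satisfies E[g(I)·1_{I>0}] = (1/2)·η_c·I_d·τ − I_d·η_c·(exp(−(I_d − K_c)²/2) − exp(−I_d²/2))/(√(2π)·K_c) − (1/2)·(η_c/K_c)·(1 + I_d²)·ν. (Corollary 1: mean harvested solar power.) -/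
open MeasureTheory Real

/-- Gaussian density with mean `Id` and unit variance. -/
noncomputable def gaussianDensity (Id x : ℝ) : ℝ :=
  (1 / Real.sqrt (2 * Real.pi)) * Real.exp (-(x - Id) ^ 2 / 2)

/-- The error function `erf(x) = (2/√π)·∫₀ˣ e^{−t²} dt`. -/
noncomputable def erf (x : ℝ) : ℝ :=
  (2 / Real.sqrt Real.pi) * ∫ t in (0 : ℝ)..x, Real.exp (-t ^ 2)

open Filter Set
open scoped ENNReal NNReal

lemma erf_hasDerivAt (x : ℝ) :
    HasDerivAt erf (2 / Real.sqrt Real.pi * Real.exp (-x ^ 2)) x := by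
  have hc : Continuous fun t : ℝ => Real.exp (-t ^ 2) := by continuity
  have h := ((hc.integral_hasStrictDerivAt 0 x).hasDerivAt).const_mul (2 / Real.sqrt Real.pi)
  exact h

lemma erf_neg (x : ℝ) : erf (-x) = - erf x := by
  have h := intervalIntegral.integral_comp_neg (a := (0:ℝ)) (b := -x)
    (fun t => Real.exp (-t ^ 2))
  simp only [neg_neg, neg_sq, neg_zero] at h
  unfold erf
  rw [h, intervalIntegral.integral_symm]
  ring

lemma tendsto_erf : Tendsto erf atTop (nhds 1) := by
  have hint : IntegrableOn (fun t : ℝ => Real.exp (-t ^ 2)) (Set.Ioi 0) := by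
    have := (integrable_exp_neg_mul_sq (b := 1) one_pos).integrableOn (s := Set.Ioi 0)
    simpa using this
  have h := intervalIntegral_tendsto_integral_Ioi (b := fun x : ℝ => x) 0 hint tendsto_id
  have hval : (∫ t in Set.Ioi (0:ℝ), Real.exp (-t ^ 2)) = Real.sqrt Real.pi / 2 := by
    have := integral_gaussian_Ioi 1
    simpa using this
  rw [hval] at h
  have h2 := h.const_mul (2 / Real.sqrt Real.pi)
  have hπ : Real.sqrt Real.pi ≠ 0 := ne_of_gt (Real.sqrt_pos.mpr Real.pi_pos)
  have : 2 / Real.sqrt Real.pi * (Real.sqrt Real.pi / 2) = 1 := by field_simp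
  rw [this] at h2
  exact h2

lemma Phi_hasDerivAt (Id x : ℝ) :
    HasDerivAt (fun y => (1/2 : ℝ) * erf ((y - Id) / Real.sqrt 2)) (gaussianDensity Id x) x := by
  have hu : HasDerivAt (fun y : ℝ => (y - Id) / Real.sqrt 2) (1 / Real.sqrt 2) x := by
    simpa using ((hasDerivAt_id x).sub_const Id).div_const (Real.sqrt 2)
  have h := HasDerivAt.const_mul (1/2 : ℝ)
    ((erf_hasDerivAt ((x - Id) / Real.sqrt 2)).comp x hu)
  have h2 : (0:ℝ) < Real.sqrt 2 := Real.sqrt_pos.mpr two_pos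
  have hπ : (0:ℝ) < Real.sqrt Real.pi := Real.sqrt_pos.mpr Real.pi_pos
  have key : (1/2 : ℝ) * (2 / Real.sqrt Real.pi * Real.exp (-((x - Id) / Real.sqrt 2) ^ 2) * (1 / Real.sqrt 2))
      = gaussianDensity Id x := by
    have hsq : ((x - Id) / Real.sqrt 2) ^ 2 = (x - Id) ^ 2 / 2 := by
      rw [div_pow, Real.sq_sqrt (by norm_num : (0:ℝ) ≤ 2)]
    rw [hsq]
    unfold gaussianDensity
    rw [Real.sqrt_mul (by norm_num : (0:ℝ) ≤ 2) Real.pi, neg_div]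
    field_simp
  rw [key] at h
  exact h

lemma gd_hasDerivAt (Id x : ℝ) :
    HasDerivAt (gaussianDensity Id) (-(x - Id) * gaussianDensity Id x) x := by
  have hv : HasDerivAt (fun y : ℝ => -(y - Id) ^ 2 / 2) (-(x - Id)) x := by
    have h := (((hasDerivAt_id x).sub_const Id).pow 2).neg.div_const 2
    refine h.congr_deriv ?_
    simp only [id_eq]
    ring
  have h := HasDerivAt.const_mul (1 / Real.sqrt (2 * Real.pi)) hv.exp
  unfold gaussianDensity
  refine h.congr_deriv ?_
  ring

lemma G_hasDerivAt (Id x : ℝ) :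
    HasDerivAt (fun y => -((y + Id) * gaussianDensity Id y)
        + (1 + Id ^ 2) * ((1/2 : ℝ) * erf ((y - Id) / Real.sqrt 2)))
      (x ^ 2 * gaussianDensity Id x) x := by
  have h1 := (((hasDerivAt_id x).add_const Id).mul (gd_hasDerivAt Id x)).neg
  have h2 := HasDerivAt.const_mul (1 + Id ^ 2) (Phi_hasDerivAt Id x)
  have h := h1.add h2
  refine h.congr_deriv ?_
  simp only [id_eq]
  ring

lemma H_hasDerivAt (Id x : ℝ) :
    HasDerivAt (fun y => -gaussianDensity Id y + Id * ((1/2 : ℝ) * erf ((y - Id) / Real.sqrt 2)))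
      (x * gaussianDensity Id x) x := by
  have h := (gd_hasDerivAt Id x).neg.add (HasDerivAt.const_mul Id (Phi_hasDerivAt Id x))
  refine h.congr_deriv ?_
  ring

lemma tendsto_sub_const (Id : ℝ) : Tendsto (fun x : ℝ => x - Id) atTop atTop := by
  simpa [sub_eq_add_neg] using tendsto_atTop_add_const_right atTop (-Id) tendsto_id

lemma tendsto_gd (Id : ℝ) : Tendsto (gaussianDensity Id) atTop (nhds 0) := by
  have h2 : Tendsto (fun x : ℝ => (x - Id) ^ 2) atTop atTop :=
    (tendsto_pow_atTop (by norm_num : 2 ≠ 0)).comp (tendsto_sub_const Id)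
  have h3 : Tendsto (fun x : ℝ => (x - Id) ^ 2 / 2) atTop atTop :=
    h2.atTop_div_const two_pos
  have h4 : Tendsto (fun x : ℝ => -((x - Id) ^ 2 / 2)) atTop atBot :=
    tendsto_neg_atTop_atBot.comp h3
  have h5 : Tendsto (fun x : ℝ => Real.exp (-((x - Id) ^ 2 / 2))) atTop (nhds 0) :=
    Real.tendsto_exp_atBot.comp h4
  have h6 := h5.const_mul (1 / Real.sqrt (2 * Real.pi))
  rw [mul_zero] at h6
  unfold gaussianDensity
  simpa [neg_div] using h6

lemma tendsto_erf_shift (Id : ℝ) :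
    Tendsto (fun x : ℝ => erf ((x - Id) / Real.sqrt 2)) atTop (nhds 1) :=
  tendsto_erf.comp ((tendsto_sub_const Id).atTop_div_const (Real.sqrt_pos.mpr two_pos))


/-- **Corollary 1 (mean harvested solar power).** With
`τ = 1 + erf((I_d − K_c)/√2)` and `ν = τ − 1 − erf(I_d/√2)`,
`E[g(I)·1_{I>0}] = (1/2)·η_c·I_d·τ
  − I_d·η_c·(exp(−(I_d−K_c)²/2) − exp(−I_d²/2))/(√(2π)·K_c)
  − (1/2)·(η_c/K_c)·(1+I_d²)·ν`. -/
theorem mean_harvested_solar_power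
    {Ω : Type*} [MeasurableSpace Ω] (μ : Measure Ω) [IsProbabilityMeasure μ]
    (Id ηc Kc : ℝ) (hId : 0 < Id) (hηc : 0 < ηc) (hKc : 0 < Kc)
    (I : Ω → ℝ) (hI : Measurable I)
    (hlaw : μ.map I = volume.withDensity fun x => ENNReal.ofReal (gaussianDensity Id x))
    (g : ℝ → ℝ)
    (hg₁ : ∀ x : ℝ, 0 < x → x < Kc → g x = (ηc / Kc) * x ^ 2)
    (hg₂ : ∀ x : ℝ, Kc ≤ x → g x = ηc * x)
    (τ ν : ℝ)
    (hτ : τ = 1 + erf ((Id - Kc) / Real.sqrt 2))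
    (hν : ν = τ - 1 - erf (Id / Real.sqrt 2)) :
    ∫ ω in {ω | 0 < I ω}, g (I ω) ∂μ =
      (1 / 2) * ηc * Id * τ
        - Id * ηc * (Real.exp (-(Id - Kc) ^ 2 / 2) - Real.exp (-Id ^ 2 / 2))
            / (Real.sqrt (2 * Real.pi) * Kc)
        - (1 / 2) * (ηc / Kc) * (1 + Id ^ 2) * ν := by
  have hdcont : Continuous (gaussianDensity Id) := by
    unfold gaussianDensity; continuity
  have hdnn : ∀ x, 0 ≤ gaussianDensity Id x := fun x =>
    mul_nonneg (by positivity) (Real.exp_pos _).le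
  set G' : ℝ → ℝ :=
    fun x => if 0 < x then (if x < Kc then (ηc/Kc) * x ^ 2 else ηc * x) else 0 with hG'
  have hG'meas : Measurable G' := by
    apply Measurable.ite (measurableSet_lt measurable_const measurable_id)
    · exact Measurable.ite (measurableSet_lt measurable_id measurable_const)
        ((measurable_id.pow_const 2).const_mul _) (measurable_id.const_mul ηc)
    · exact measurable_const
  have step1 : ∫ ω in {ω | 0 < I ω}, g (I ω) ∂μ
      = ∫ ω in I ⁻¹' (Set.Ioi 0), G' (I ω) ∂μ := by
    apply setIntegral_congr_fun (hI measurableSet_Ioi)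
    intro ω hω
    simp only [Set.mem_preimage, Set.mem_Ioi] at hω
    by_cases hlt : I ω < Kc
    · simp [hG', hω, hlt, hg₁ _ hω hlt]
    · push_neg at hlt
      simp [hG', hω, not_lt.mpr hlt, hg₂ _ hlt]
  have step2 : ∫ ω in I ⁻¹' (Set.Ioi 0), G' (I ω) ∂μ
      = ∫ x in Set.Ioi 0, G' x ∂(μ.map I) :=
    (setIntegral_map measurableSet_Ioi hG'meas.aestronglyMeasurable hI.aemeasurable).symm
  have step3 : ∫ x in Set.Ioi 0, G' x ∂(μ.map I)
      = ∫ x in Set.Ioi 0, gaussianDensity Id x * G' x := by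
    rw [hlaw, restrict_withDensity measurableSet_Ioi]
    rw [show (fun x => ENNReal.ofReal (gaussianDensity Id x))
        = fun x => (((fun x => (gaussianDensity Id x).toNNReal) x : ℝ≥0) : ℝ≥0∞) from rfl]
    rw [integral_withDensity_eq_integral_smul hdcont.measurable.real_toNNReal G']
    refine integral_congr_ae (Filter.Eventually.of_forall fun x => ?_)
    simp [NNReal.smul_def, Real.coe_toNNReal _ (hdnn x)]
  -- tail integral on Ioi Kc
  set H : ℝ → ℝ :=
    fun y => -gaussianDensity Id y + Id * ((1/2 : ℝ) * erf ((y - Id) / Real.sqrt 2)) with hH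
  have hHd : ∀ x, HasDerivAt H (x * gaussianDensity Id x) x := H_hasDerivAt Id
  have hHtend : Tendsto H atTop (nhds (Id / 2)) := by
    have hsum := ((tendsto_gd Id).neg).add
      (((tendsto_erf_shift Id).const_mul (1/2 : ℝ)).const_mul Id)
    have hv : -(0:ℝ) + Id * ((1/2) * 1) = Id / 2 := by ring
    rw [hv] at hsum
    exact hsum
  have hcw : ContinuousWithinAt H (Set.Ici Kc) Kc := (hHd Kc).continuousAt.continuousWithinAt
  have hpos : ∀ x ∈ Set.Ioi Kc, 0 ≤ x * gaussianDensity Id x := fun x hx =>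
    mul_nonneg (le_of_lt (lt_trans hKc hx)) (hdnn x)
  have hIoiVal : ∫ x in Set.Ioi Kc, x * gaussianDensity Id x = Id / 2 - H Kc :=
    integral_Ioi_of_hasDerivAt_of_nonneg hcw (fun x _ => hHd x) hpos hHtend
  have hIoiInt : IntegrableOn (fun x => x * gaussianDensity Id x) (Set.Ioi Kc) :=
    integrableOn_Ioi_deriv_of_nonneg hcw (fun x _ => hHd x) hpos hHtend
  -- Ioc integral via FTC
  set Gf : ℝ → ℝ := fun y => -((y + Id) * gaussianDensity Id y)
      + (1 + Id ^ 2) * ((1/2 : ℝ) * erf ((y - Id) / Real.sqrt 2)) with hGf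
  have hIocVal : ∫ x in Set.Ioc 0 Kc, x ^ 2 * gaussianDensity Id x = Gf Kc - Gf 0 := by
    rw [← intervalIntegral.integral_of_le hKc.le]
    exact intervalIntegral.integral_eq_sub_of_hasDerivAt (fun x _ => G_hasDerivAt Id x)
      (((continuous_pow 2).mul hdcont).intervalIntegrable _ _)
  -- congruences
  have heq1 : Set.EqOn (fun x => gaussianDensity Id x * G' x)
      (fun x => (ηc/Kc) * (x ^ 2 * gaussianDensity Id x)) (Set.Ioc 0 Kc) := by
    intro x hx
    have hx0 : 0 < x := hx.1
    by_cases hlt : x < Kc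
    · simp only [hG', if_pos hx0, if_pos hlt]; ring
    · have hxK : x = Kc := le_antisymm hx.2 (not_lt.mp hlt)
      simp only [hG', if_pos hx0, if_neg hlt]
      rw [hxK]; field_simp
  have heq2 : Set.EqOn (fun x => gaussianDensity Id x * G' x)
      (fun x => ηc * (x * gaussianDensity Id x)) (Set.Ioi Kc) := by
    intro x hx
    have hx0 : 0 < x := lt_trans hKc hx
    simp only [hG', if_pos hx0, if_neg (not_lt.mpr (le_of_lt (Set.mem_Ioi.mp hx)))]
    ring
  have hint1 : IntegrableOn (fun x => gaussianDensity Id x * G' x) (Set.Ioc 0 Kc) := by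
    have : IntegrableOn (fun x => (ηc/Kc) * (x ^ 2 * gaussianDensity Id x)) (Set.Ioc 0 Kc) :=
      (Continuous.integrableOn_Ioc (continuous_const.mul ((continuous_pow 2).mul hdcont)))
    exact this.congr_fun heq1.symm measurableSet_Ioc
  have hint2 : IntegrableOn (fun x => gaussianDensity Id x * G' x) (Set.Ioi Kc) := by
    have : IntegrableOn (fun x => ηc * (x * gaussianDensity Id x)) (Set.Ioi Kc) :=
      hIoiInt.const_mul ηc
    exact this.congr_fun heq2.symm measurableSet_Ioi
  have hsplit : ∫ x in Set.Ioi 0, gaussianDensity Id x * G' x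
      = (∫ x in Set.Ioc 0 Kc, gaussianDensity Id x * G' x)
        + ∫ x in Set.Ioi Kc, gaussianDensity Id x * G' x := by
    rw [← Set.Ioc_union_Ioi_eq_Ioi hKc.le]
    exact setIntegral_union (Set.Ioc_disjoint_Ioi le_rfl) measurableSet_Ioi hint1 hint2
  have hA : ∫ x in Set.Ioc 0 Kc, gaussianDensity Id x * G' x = (ηc/Kc) * (Gf Kc - Gf 0) := by
    rw [setIntegral_congr_fun measurableSet_Ioc heq1, integral_const_mul, hIocVal]
  have hB : ∫ x in Set.Ioi Kc, gaussianDensity Id x * G' x = ηc * (Id / 2 - H Kc) := by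
    rw [setIntegral_congr_fun measurableSet_Ioi heq2, integral_const_mul, hIoiVal]
  rw [show {ω | 0 < I ω} = I ⁻¹' (Set.Ioi 0) from rfl] at step1 ⊢
  rw [step1, step2, step3, hsplit, hA, hB]
  -- final algebra
  have hKrw : (Kc - Id) / Real.sqrt 2 = -((Id - Kc) / Real.sqrt 2) := by ring
  have h0rw : ((0:ℝ) - Id) / Real.sqrt 2 = -(Id / Real.sqrt 2) := by ring
  have herf1 : erf ((Id - Kc) / Real.sqrt 2) = τ - 1 := by rw [hτ]; ring
  have herf2 : erf (Id / Real.sqrt 2) = τ - 1 - ν := by rw [hν]; ring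
  have hsq1 : (Kc - Id) ^ 2 = (Id - Kc) ^ 2 := by ring
  have hsq0 : ((0:ℝ) - Id) ^ 2 = Id ^ 2 := by ring
  simp only [hGf, hH, gaussianDensity, hKrw, h0rw, erf_neg, herf1, herf2, hsq1, hsq0]
  have hs : Real.sqrt (2 * Real.pi) ≠ 0 :=
    ne_of_gt (Real.sqrt_pos.mpr (by positivity))
  field_simp
  ring
end
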